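/- For every integer N ≥ 1, the number e_N of binary strings of length N that contain at least one occurrence of 001 as a contiguous substring satisfies e_N = Σ_{k=1}^{⌊N/3⌋} (−1)^{k+1} · C(N−2k, k) · 2^{N−3k}, where C(·,·) denotes the binomial coefficient. -/

import Mathlib

/-- `occCount a x` : number of starting positions at which the binary string `a`
of length `k` occurs as a contiguous substring of the binary string `x` of length `N`. -/
def occCount {k N : ℕ} (a : Fin k → Bool) (x : Fin N → Bool) : ℕ :=
  ((List.range (N - k + 1)).filter
    (fun i => (List.ofFn a).isPrefixOf ((List.ofFn x).drop i))).length

/-- The string `001` (with `0 = false`, `1 = true`). -/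
def rule001 : Fin 3 → Bool := ![false, false, true]

/-- `eCount N` : the number of binary strings of length `N` containing at least one
occurrence of `001` as a contiguous substring. -/
def eCount (N : ℕ) : ℕ :=
  (Finset.univ.filter fun x : Fin N → Bool => 1 ≤ occCount rule001 x).card


def pat : List Bool := [false, false, true]
def Av (l : List Bool) : Prop := ¬ pat <:+: l
instance : DecidablePred Av := fun l => by unfold Av; infer_instance

def cnt (p : List Bool → Prop) [DecidablePred p] (n : ℕ) : ℕ :=
  (Finset.univ.filter fun z : Fin n → Bool => p (List.ofFn z)).card

def consB {n : ℕ} (b : Bool) (z : Fin n → Bool) : Fin (n+1) → Bool := Fin.cons b z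

lemma consB_inj {n : ℕ} (b : Bool) : Function.Injective (consB (n := n) b) :=
  Fin.cons_right_injective (α := fun _ => Bool) b

@[simp] lemma consB_zero {n : ℕ} (b : Bool) (z : Fin n → Bool) : consB b z 0 = b := rfl

lemma ofFn_consB {n : ℕ} (b : Bool) (z : Fin n → Bool) :
    List.ofFn (consB b z) = b :: List.ofFn z := by
  rw [List.ofFn_succ]
  simp [consB, Fin.tail]

lemma cnt_congr (p q : List Bool → Prop) [DecidablePred p] [DecidablePred q]
    (h : ∀ l, p l ↔ q l) (n : ℕ) : cnt p n = cnt q n := by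
  unfold cnt
  congr 1
  exact Finset.filter_congr fun x _ => by rw [h]

lemma cnt_succ (p : List Bool → Prop) [DecidablePred p] (n : ℕ) :
    cnt p (n+1) = cnt (fun l => p (true :: l)) n + cnt (fun l => p (false :: l)) n := by
  classical
  unfold cnt
  have hdis : Disjoint
      ((Finset.univ.filter fun z : Fin n → Bool => p (true :: List.ofFn z)).image (consB true))
      ((Finset.univ.filter fun z : Fin n → Bool => p (false :: List.ofFn z)).image (consB false)) := by
    rw [Finset.disjoint_left]
    rintro x hx hx'
    simp only [Finset.mem_image, Finset.mem_filter] at hx hx'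
    obtain ⟨z, _, rfl⟩ := hx
    obtain ⟨w, _, hw⟩ := hx'
    have := congrFun hw 0
    simp at this
  have hset : (Finset.univ.filter fun x : Fin (n+1) → Bool => p (List.ofFn x)) =
      ((Finset.univ.filter fun z : Fin n → Bool => p (true :: List.ofFn z)).image (consB true)) ∪
      ((Finset.univ.filter fun z : Fin n → Bool => p (false :: List.ofFn z)).image (consB false)) := by
    ext x
    simp only [Finset.mem_union, Finset.mem_image, Finset.mem_filter, Finset.mem_univ, true_and]
    constructor
    · intro hx
      have hx' : x = consB (x 0) (Fin.tail x) := (Fin.cons_self_tail x).symm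
      cases h0 : x 0
      · right
        refine ⟨Fin.tail x, ?_, ?_⟩
        · rw [← ofFn_consB false (Fin.tail x), ← h0, ← hx']; exact hx
        · rw [← h0, ← hx']
      · left
        refine ⟨Fin.tail x, ?_, ?_⟩
        · rw [← ofFn_consB true (Fin.tail x), ← h0, ← hx']; exact hx
        · rw [← h0, ← hx']
    · rintro (⟨z, hz, rfl⟩ | ⟨z, hz, rfl⟩) <;> simpa only [ofFn_consB] using hz
  rw [hset, Finset.card_union_of_disjoint hdis,
      Finset.card_image_of_injective _ (consB_inj true),
      Finset.card_image_of_injective _ (consB_inj false)]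




lemma Av_true (l : List Bool) : Av (true :: l) ↔ Av l := by
  simp [Av, List.infix_cons_iff, pat, List.cons_prefix_cons]

lemma Av_ft (l : List Bool) : Av (false :: true :: l) ↔ Av l := by
  simp [Av, List.infix_cons_iff, pat, List.cons_prefix_cons]

lemma Av_ff (l : List Bool) : Av (false :: false :: l) ↔ ∀ b ∈ l, b = false := by
  induction l with
  | nil => simp [Av, pat]; decide
  | cons b l ih =>
    cases b
    · have hmem : (∀ b ∈ false :: l, b = false) ↔ (∀ b ∈ l, b = false) := by simp
      rw [hmem, ← ih]
      constructor
      · intro h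
        simp [Av, List.infix_cons_iff, pat, List.cons_prefix_cons] at h ⊢
        tauto
      · intro h
        simp [Av, List.infix_cons_iff, pat, List.cons_prefix_cons] at h ⊢
        tauto
    · constructor
      · intro h
        exact absurd (by exact ⟨[], l, rfl⟩ : pat <:+: false :: false :: true :: l) h
      · intro h; exact absurd (h true (by simp)) (by simp)

lemma Av_short (l : List Bool) (h : l.length < 3) : Av l := by
  intro hinf
  have := hinf.length_le
  simp [pat] at this
  omega

lemma cnt_ff (n : ℕ) : cnt (fun l => Av (false :: false :: l)) n = 1 := by
  unfold cnt
  rw [Finset.card_eq_one]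
  refine ⟨fun _ => false, ?_⟩
  ext z
  simp only [Finset.mem_filter, Finset.mem_univ, true_and, Finset.mem_singleton, Av_ff]
  constructor
  · intro h
    funext i
    exact h (z i) (by simp [List.mem_ofFn])
  · rintro rfl b hb
    simp [List.mem_ofFn] at hb
    exact hb.2

lemma avc_rec (n : ℕ) : cnt Av (n+2) = cnt Av (n+1) + cnt Av n + 1 := by
  rw [cnt_succ Av (n+1), cnt_congr _ Av Av_true,
      cnt_succ (fun l => Av (false :: l)) n,
      cnt_congr (fun l => Av (false :: true :: l)) Av Av_ft, cnt_ff]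
  ring

lemma avc_fib : ∀ n : ℕ, cnt Av n + 1 = Nat.fib (n+3)
  | 0 => by
    have : cnt Av 0 = 1 := by
      unfold cnt
      rw [Finset.filter_true_of_mem (fun x _ => Av_short _ (by simp))]
      simp
    rw [this]; decide
  | 1 => by
    have : cnt Av 1 = 2 := by
      unfold cnt
      rw [Finset.filter_true_of_mem (fun x _ => Av_short _ (by simp))]
      simp
    rw [this]; decide
  | (n+2) => by
    have h1 := avc_fib (n+1)
    have h2 := avc_fib n
    rw [avc_rec]
    have : Nat.fib (n+2+3) = Nat.fib (n+1+3) + Nat.fib (n+3) := by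
      rw [show n+2+3 = (n+3)+2 from rfl, Nat.fib_add_two]; ring_nf
    omega


def fTerm (n k : ℕ) : ℤ := (-1)^k * ((n - 2*k).choose k : ℤ) * 2^(n - 3*k)

def U (n : ℕ) : ℤ := ∑ k ∈ Finset.range (n+1), fTerm n k

lemma fTerm_zero (n : ℕ) : fTerm n 0 = 2^n := by simp [fTerm]

lemma fTerm_eq_zero {n k : ℕ} (_h1 : 1 ≤ k) (h2 : n < 3*k) : fTerm n k = 0 := by
  have : n - 2*k < k := by omega
  simp [fTerm, Nat.choose_eq_zero_of_lt this]

lemma f_step (m j : ℕ) : fTerm (m+3) (j+1) = 2 * fTerm (m+2) (j+1) - fTerm m j := by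
  rcases lt_trichotomy m (3*j) with h | h | h
  · rw [fTerm_eq_zero (by omega) (by omega), fTerm_eq_zero (by omega) (by omega)]
    have : m - 2*j < j := by omega
    simp [fTerm, Nat.choose_eq_zero_of_lt this]
  · -- m = 3j
    subst h
    have e1 : 3*j+3 - 2*(j+1) = j+1 := by omega
    have e2 : 3*j+3 - 3*(j+1) = 0 := by omega
    have e3 : 3*j+2 - 2*(j+1) = j := by omega
    have e4 : 3*j - 2*j = j := by omega
    have e5 : 3*j - 3*j = 0 := by omega
    simp only [fTerm, e1, e2, e3, e4, e5, Nat.choose_self,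
      Nat.choose_eq_zero_of_lt (Nat.lt_succ_self j)]
    push_cast
    ring
  · -- m ≥ 3j+1
    have e1 : m+3 - 2*(j+1) = (m - 2*j) + 1 := by omega
    have e2 : m+3 - 3*(j+1) = m - 3*j := by omega
    have e3 : m+2 - 2*(j+1) = m - 2*j := by omega
    have e4 : m+2 - 3*(j+1) = (m - 3*j) - 1 := by omega
    have e5 : m - 3*j = ((m - 3*j) - 1) + 1 := by omega
    rw [fTerm, fTerm, fTerm, e1, e2, e3, e4, Nat.choose_succ_succ, e5]
    push_cast
    ring

lemma U_rec (m : ℕ) : U (m+3) = 2 * U (m+2) - U m := by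
  have h1 : U (m+3) = fTerm (m+3) 0 + ∑ j ∈ Finset.range (m+3), fTerm (m+3) (j+1) := by
    rw [U, Finset.sum_range_succ']; ring
  have h2 : ∑ j ∈ Finset.range (m+3), fTerm (m+3) (j+1)
      = ∑ j ∈ Finset.range (m+3), (2 * fTerm (m+2) (j+1) - fTerm m j) :=
    Finset.sum_congr rfl fun j _ => f_step m j
  have h3 : ∑ j ∈ Finset.range (m+3), fTerm (m+2) (j+1) = U (m+2) - fTerm (m+2) 0 := by
    have hU : U (m+2) = ∑ j ∈ Finset.range (m+2), fTerm (m+2) (j+1) + fTerm (m+2) 0 := by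
      rw [U, Finset.sum_range_succ']
    rw [Finset.sum_range_succ, fTerm_eq_zero (by omega) (by omega), add_zero, hU]
    ring
  have h4 : ∑ j ∈ Finset.range (m+3), fTerm m j = U m := by
    rw [Finset.sum_range_succ, Finset.sum_range_succ,
      fTerm_eq_zero (by omega) (by omega), fTerm_eq_zero (by omega) (by omega), U]
    ring
  rw [h1, h2, Finset.sum_sub_distrib, ← Finset.mul_sum, h3, h4, fTerm_zero, fTerm_zero]
  ring

lemma U_fib : ∀ n : ℕ, U n = (Nat.fib (n+3) : ℤ) - 1
  | 0 => by
    rw [U]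
    simp [Finset.sum_range_succ, fTerm]
    decide
  | 1 => by
    rw [U]
    simp [Finset.sum_range_succ, fTerm]
    decide
  | 2 => by
    rw [U]
    simp [Finset.sum_range_succ, fTerm]
    decide
  | (n+3) => by
    have h0 := U_fib n
    have h2 := U_fib (n+2)
    rw [U_rec, h0, h2]
    have e1 : Nat.fib (n+3+3) = Nat.fib (n+3+1) + Nat.fib (n+3+2) := by
      rw [show n+3+3 = (n+3+1)+2 from rfl, Nat.fib_add_two]
    have e2 : Nat.fib (n+3+2) = Nat.fib (n+3) + Nat.fib (n+3+1) := by
      rw [show n+3+2 = (n+3)+2 from rfl, Nat.fib_add_two]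
    push_cast [e1, e2]
    ring

lemma ofFn_rule001 : List.ofFn rule001 = pat := by decide

lemma occ_pos_iff {N : ℕ} (x : Fin N → Bool) :
    1 ≤ occCount rule001 x ↔ pat <:+: List.ofFn x := by
  rw [occCount, ofFn_rule001]
  constructor
  · intro h
    obtain ⟨i, hi⟩ := List.exists_mem_of_length_pos h
    rw [List.mem_filter] at hi
    obtain ⟨-, hpre⟩ := hi
    have hp : pat <+: (List.ofFn x).drop i := List.isPrefixOf_iff_prefix.mp hpre
    exact hp.isInfix.trans (List.drop_suffix i _).isInfix
  · rintro ⟨s, t, hst⟩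
    have hlen : s.length + pat.length + t.length = N := by
      have := congrArg List.length hst
      simp [List.length_append] at this
      omega
    have hmem : s.length ∈ (List.range (N - 3 + 1)).filter
        (fun i => pat.isPrefixOf ((List.ofFn x).drop i)) := by
      rw [List.mem_filter, List.mem_range]
      constructor
      · simp [pat] at hlen; omega
      · have hdrop : (List.ofFn x).drop s.length = pat ++ t := by
          rw [← hst, List.append_assoc, List.drop_left]
        rw [hdrop]
        exact List.isPrefixOf_iff_prefix.mpr ⟨t, rfl⟩
    exact List.length_pos_iff.mpr (List.ne_nil_of_mem hmem)

lemma eCount_compl (N : ℕ) : eCount N + cnt Av N = 2 ^ N := by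
  rw [eCount, cnt]
  have hfc : (Finset.univ.filter fun z : Fin N → Bool => Av (List.ofFn z)) =
      Finset.univ.filter fun x : Fin N → Bool => ¬ (1 ≤ occCount rule001 x) := by
    refine Finset.filter_congr fun x _ => ?_
    rw [Av, not_iff_not.mpr (occ_pos_iff x)]
  rw [hfc, Finset.card_filter_add_card_filter_not]
  simp

theorem stmt5 (N : ℕ) (hN : 1 ≤ N) :
    (eCount N : ℤ) =
      ∑ k ∈ Finset.Icc 1 (N / 3),
        (-1 : ℤ) ^ (k + 1) * ((N - 2 * k).choose k : ℤ) * 2 ^ (N - 3 * k) := by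
  have h1 : (eCount N : ℤ) + (cnt Av N : ℤ) = 2 ^ N := by
    have := eCount_compl N
    exact_mod_cast this
  have h2 : (cnt Av N : ℤ) = (Nat.fib (N + 3) : ℤ) - 1 := by
    have := avc_fib N
    omega
  have h3 : U N = (Nat.fib (N + 3) : ℤ) - 1 := U_fib N
  have hU : U N = fTerm N 0 + ∑ k ∈ Finset.Icc 1 N, fTerm N k := by
    rw [U, show Finset.range (N + 1) = insert 0 (Finset.Icc 1 N) from by
      ext k; simp [Finset.mem_Icc, Nat.lt_succ_iff]; omega,
      Finset.sum_insert (by simp)]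
  have hsub : ∑ k ∈ Finset.Icc 1 (N / 3), fTerm N k = ∑ k ∈ Finset.Icc 1 N, fTerm N k := by
    refine Finset.sum_subset (Finset.Icc_subset_Icc_right (Nat.div_le_self N 3)) ?_
    intro k hk hk'
    rw [Finset.mem_Icc] at hk hk'
    have h1k : 1 ≤ k := hk.1
    have : N / 3 < k := by omega
    exact fTerm_eq_zero h1k (by omega)
  have hterm : ∑ k ∈ Finset.Icc 1 (N / 3),
      (-1 : ℤ) ^ (k + 1) * ((N - 2 * k).choose k : ℤ) * 2 ^ (N - 3 * k)
      = - ∑ k ∈ Finset.Icc 1 (N / 3), fTerm N k := by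
    rw [← Finset.sum_neg_distrib]
    exact Finset.sum_congr rfl fun k _ => by rw [fTerm]; ring
  rw [hterm, hsub]
  have : fTerm N 0 = 2 ^ N := fTerm_zero N
  linarith
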